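/- Let X be a subset of a real normed vector space, let f : X → ℝ attain a minimum at x* ∈ X (i.e. f(x*) ≤ f(x) for all x ∈ X), let λ > 0, L ≥ 0, B ≥ 0, let (x_k)_{k≥0} be a sequence in X with f(x_{k+1}) ≤ f(x_k) for all k ≥ 0, and let (z_k)_{k≥0} be a sequence of nonnegative reals with |z_k − z_0| ≤ B for all k ≥ 0. Suppose that with step sizes α_k = 1/(λ(k+2)) the fundamental inequality α_k (f(x_k) − f(x)) ≤ (1 − λ α_k) ‖x_k − x‖² − ‖x_{k+1} − x‖² + λ α_k (z_k − z_{k+1}) + α_k² L²/2 holds for every k ≥ 0 and every x ∈ X. Then for every N ≥ 1, f(x_N) − f(x*) ≤ (λ ‖x_0 − x*‖²)/N + (λ B)/N + (L² log(N+2))/(2 λ N); in particular f(x_k) → f(x*) as k → ∞. -/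

import Mathlib

open Filter Topology

private lemma harmonic_log_bound : ∀ N : ℕ,
    (Finset.range N).sum (fun k => 1 / ((k : ℝ) + 2)) ≤ Real.log ((N : ℝ) + 1) := by
  intro N
  induction N with
  | zero => simp
  | succ n ih =>
    rw [Finset.sum_range_succ]
    have h1 : (0:ℝ) < (n:ℝ) + 1 := by positivity
    have h2 : (0:ℝ) < (n:ℝ) + 2 := by positivity
    have key : 1 / ((n:ℝ) + 2) ≤ Real.log ((n:ℝ) + 2) - Real.log ((n:ℝ) + 1) := by
      have hpos : (0:ℝ) < ((n:ℝ) + 2) / ((n:ℝ) + 1) := by positivity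
      have h := Real.one_sub_inv_le_log_of_pos hpos
      rw [Real.log_div (by positivity) (by positivity), inv_div] at h
      have e : (1:ℝ) - ((n:ℝ) + 1) / ((n:ℝ) + 2) = 1 / ((n:ℝ) + 2) := by
        field_simp
        norm_num
      rw [e] at h
      exact h
    push_cast
    have e2' : ((n:ℝ) + 1 + 1) = (n:ℝ) + 2 := by ring
    rw [e2']
    push_cast at ih
    linarith

/-- Mirror-descent fundamental inequality implies an O(log N / N) convergence rate
to the value of a minimizer, and in particular convergence of `f (x k)` to `f x*`. -/
theorem mirror_descent_rate {E : Type*} [NormedAddCommGroup E] [NormedSpace ℝ E]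
    (X : Set E) (f : E → ℝ) (xstar : E) (hxstar : xstar ∈ X)
    (hmin : ∀ y ∈ X, f xstar ≤ f y)
    (lam L B : ℝ) (hlam : 0 < lam) (hL : 0 ≤ L) (hB : 0 ≤ B)
    (x : ℕ → E) (hxX : ∀ k, x k ∈ X)
    (hmono : ∀ k, f (x (k + 1)) ≤ f (x k))
    (z : ℕ → ℝ) (hz : ∀ k, 0 ≤ z k) (hzB : ∀ k, |z k - z 0| ≤ B)
    (α : ℕ → ℝ) (hα : ∀ k, α k = 1 / (lam * ((k : ℝ) + 2)))
    (hfund : ∀ k, ∀ y ∈ X,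
      α k * (f (x k) - f y) ≤
        (1 - lam * α k) * ‖x k - y‖ ^ 2 - ‖x (k + 1) - y‖ ^ 2
          + lam * α k * (z k - z (k + 1)) + α k ^ 2 * L ^ 2 / 2) :
    (∀ N : ℕ, 1 ≤ N →
      f (x N) - f xstar ≤
        lam * ‖x 0 - xstar‖ ^ 2 / N + lam * B / N
          + L ^ 2 * Real.log ((N : ℝ) + 2) / (2 * lam * N)) ∧
    Tendsto (fun k => f (x k)) atTop (𝓝 (f xstar)) := by
  -- notation
  set D : ℕ → ℝ := fun k => ‖x k - xstar‖ ^ 2 with hD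
  set S : ℕ → ℝ := fun k => ((k : ℝ) + 1) * D k with hS
  -- step inequality
  have step : ∀ k : ℕ, f (x k) - f xstar ≤
      lam * (S k - S (k + 1)) + lam * (z k - z (k + 1))
        + L ^ 2 / (2 * lam * ((k : ℝ) + 2)) := by
    intro k
    have hk := hfund k xstar hxstar
    rw [hα k] at hk
    have hc : (0:ℝ) < lam * ((k : ℝ) + 2) := by positivity
    have hmul := mul_le_mul_of_nonneg_left hk hc.le
    have e1 : lam * ((k : ℝ) + 2) * (1 / (lam * ((k : ℝ) + 2)) * (f (x k) - f xstar))
        = f (x k) - f xstar := by field_simp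
    have e2 : lam * ((k : ℝ) + 2) *
        ((1 - lam * (1 / (lam * ((k : ℝ) + 2)))) * ‖x k - xstar‖ ^ 2
          - ‖x (k + 1) - xstar‖ ^ 2
          + lam * (1 / (lam * ((k : ℝ) + 2))) * (z k - z (k + 1))
          + (1 / (lam * ((k : ℝ) + 2))) ^ 2 * L ^ 2 / 2)
        = lam * (S k - S (k + 1)) + lam * (z k - z (k + 1))
            + L ^ 2 / (2 * lam * ((k : ℝ) + 2)) := by
      simp only [hS, hD]
      push_cast
      field_simp
      ring
    rw [e1, e2] at hmul
    exact hmul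
  -- summed inequality
  have hsum : ∀ N : ℕ,
      (Finset.range N).sum (fun k => f (x k) - f xstar) ≤
        lam * (S 0 - S N) + lam * (z 0 - z N)
          + L ^ 2 / (2 * lam) * (Finset.range N).sum (fun k => 1 / ((k : ℝ) + 2)) := by
    intro N
    have hsum1 : (Finset.range N).sum (fun k => f (x k) - f xstar) ≤
        (Finset.range N).sum (fun k => lam * (S k - S (k + 1)) + lam * (z k - z (k + 1))
          + L ^ 2 / (2 * lam * ((k : ℝ) + 2))) :=
      Finset.sum_le_sum (fun k _ => step k)
    have htel : (Finset.range N).sum (fun k => lam * (S k - S (k + 1)) + lam * (z k - z (k + 1))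
          + L ^ 2 / (2 * lam * ((k : ℝ) + 2))) =
        lam * (S 0 - S N) + lam * (z 0 - z N)
          + L ^ 2 / (2 * lam) * (Finset.range N).sum (fun k => 1 / ((k : ℝ) + 2)) := by
      rw [Finset.sum_add_distrib, Finset.sum_add_distrib]
      rw [← Finset.mul_sum, ← Finset.mul_sum, Finset.sum_range_sub' S, Finset.sum_range_sub' z]
      rw [Finset.mul_sum]
      congr 1
      apply Finset.sum_congr rfl
      intro k _
      have h2 : ((k:ℝ) + 2) ≠ 0 := by positivity
      field_simp
    calc _ ≤ _ := hsum1
      _ = _ := htel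
  -- antitone
  have hanti : ∀ k N : ℕ, k ≤ N → f (x N) ≤ f (x k) := by
    intro k N hkN
    induction N with
    | zero => simp_all
    | succ n ih =>
      rcases Nat.lt_or_ge k (n+1) with h | h
      · exact le_trans (hmono n) (ih (Nat.lt_succ_iff.mp h))
      · have : k = n + 1 := le_antisymm hkN h
        rw [this]
  -- main rate bound
  have main : ∀ N : ℕ, 1 ≤ N →
      f (x N) - f xstar ≤
        lam * ‖x 0 - xstar‖ ^ 2 / N + lam * B / N
          + L ^ 2 * Real.log ((N : ℝ) + 2) / (2 * lam * N) := by
    intro N hN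
    have hNpos : (0:ℝ) < N := by exact_mod_cast hN
    have hlower : (N : ℝ) * (f (x N) - f xstar) ≤
        (Finset.range N).sum (fun k => f (x k) - f xstar) := by
      have : (Finset.range N).sum (fun _ => f (x N) - f xstar) ≤
          (Finset.range N).sum (fun k => f (x k) - f xstar) :=
        Finset.sum_le_sum (fun k hk => by
          have := hanti k N (le_of_lt (Finset.mem_range.mp hk))
          linarith)
      rw [Finset.sum_const, Finset.card_range, nsmul_eq_mul] at this
      exact this
    have hS0 : S 0 = D 0 := by simp [hS]
    have hSN : 0 ≤ S N := by
      have : (0:ℝ) ≤ D N := by positivity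
      have hN1 : (0:ℝ) ≤ (N:ℝ) + 1 := by positivity
      exact mul_nonneg hN1 this
    have hzN : z 0 - z N ≤ B := by
      have := hzB N
      have := abs_le.mp (hzB N)
      linarith [this.1]
    have hlogsum : (Finset.range N).sum (fun k => 1 / ((k : ℝ) + 2)) ≤
        Real.log ((N : ℝ) + 2) := by
      refine le_trans (harmonic_log_bound N) ?_
      apply Real.log_le_log (by positivity)
      linarith
    have hLnn : (0:ℝ) ≤ L ^ 2 / (2 * lam) := by positivity
    have hfinal : (N : ℝ) * (f (x N) - f xstar) ≤
        lam * D 0 + lam * B + L ^ 2 / (2 * lam) * Real.log ((N : ℝ) + 2) := by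
      have h1 := hsum N
      have h2 := mul_le_mul_of_nonneg_left hlogsum hLnn
      nlinarith [hlam, hSN, hzN, hS0]
    have key : f (x N) - f xstar ≤
        (lam * D 0 + lam * B + L ^ 2 / (2 * lam) * Real.log ((N : ℝ) + 2)) / N := by
      rw [le_div_iff₀ hNpos]
      nlinarith [hfinal]
    have heq : (lam * D 0 + lam * B + L ^ 2 / (2 * lam) * Real.log ((N : ℝ) + 2)) / N
        = lam * ‖x 0 - xstar‖ ^ 2 / N + lam * B / N
          + L ^ 2 * Real.log ((N : ℝ) + 2) / (2 * lam * N) := by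
      simp only [hD]
      field_simp
    rw [← heq]
    exact key
  refine ⟨main, ?_⟩
  -- convergence
  have hbound0 : Tendsto (fun N : ℕ =>
      lam * ‖x 0 - xstar‖ ^ 2 / N + lam * B / N
        + L ^ 2 * Real.log ((N : ℝ) + 2) / (2 * lam * N)) atTop (𝓝 0) := by
    have h1 : Tendsto (fun N : ℕ => lam * ‖x 0 - xstar‖ ^ 2 / N) atTop (𝓝 0) :=
      tendsto_const_div_atTop_nhds_zero_nat _
    have h2 : Tendsto (fun N : ℕ => lam * B / N) atTop (𝓝 0) :=
      tendsto_const_div_atTop_nhds_zero_nat _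
    have h3 : Tendsto (fun N : ℕ => Real.log ((N : ℝ) + 2) / N) atTop (𝓝 0) := by
      have hr := Real.tendsto_pow_log_div_mul_add_atTop 1 (-2) 1 one_ne_zero
      have hc : Tendsto (fun N : ℕ => (N : ℝ) + 2) atTop atTop :=
        tendsto_atTop_add_const_right _ 2 tendsto_natCast_atTop_atTop
      have := hr.comp hc
      refine this.congr (fun N => ?_)
      simp only [Function.comp_apply, pow_one]
      norm_num
    have h3' : Tendsto (fun N : ℕ => L ^ 2 * Real.log ((N : ℝ) + 2) / (2 * lam * N))
        atTop (𝓝 0) := by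
      have := h3.const_mul (L ^ 2 / (2 * lam))
      rw [mul_zero] at this
      refine this.congr (fun N => ?_)
      rw [div_mul_div_comm]
    have := (h1.add h2).add h3'
    simpa using this
  have hdiff : Tendsto (fun k : ℕ => f (x k) - f xstar) atTop (𝓝 0) := by
    apply squeeze_zero' (g := fun N : ℕ =>
      lam * ‖x 0 - xstar‖ ^ 2 / N + lam * B / N
        + L ^ 2 * Real.log ((N : ℝ) + 2) / (2 * lam * N))
    · filter_upwards with k
      have := hmin (x k) (hxX k)
      linarith
    · filter_upwards [eventually_ge_atTop 1] with N hN
      exact main N hN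
    · exact hbound0
  have := hdiff.add_const (f xstar)
  simpa using this
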